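/- Let n ≥ 1, s > 0 and ρ > 0. On the domain D = {(z,w,ζ) ∈ ℂⁿ × ℂⁿ × ℂ : |Im z|² + |Im w|² + 4|Im ζ| < ρ²}, setting A = ρ² + Σ_{j=1}^n z_j² + Σ_{j=1}^n w_j², both A + 4iζ and A − 4iζ have strictly positive real part; consequently A² + 16ζ² never lies in the half-line (−∞,0], and the function (z,w,ζ) ↦ (A² + 16ζ²)^{−(n+1+s)/2}, defined via the principal branch of the complex power, is holomorphic on D and restricts at real points (x,u,ξ) to ((ρ² + |x|² + |u|²)² + 16ξ²)^{−(n+1+s)/2}. -/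
import Mathlib


open Complex

lemma mul_mem_slitPlane_of_pos_re' {a b : ℂ} (ha : 0 < a.re) (hb : 0 < b.re) :
    a * b ∈ Complex.slitPlane := by
  rw [Complex.mem_slitPlane_iff]
  by_contra h
  push_neg at h
  obtain ⟨h1, h2⟩ := h
  simp only [Complex.mul_re, Complex.mul_im] at h1 h2
  have e1 : a.re * (a.re * b.re - a.im * b.im) ≤ 0 := mul_nonpos_of_nonneg_of_nonpos ha.le h1
  have e2 : a.im * (a.re * b.im + a.im * b.re) = 0 := by rw [h2]; ring
  nlinarith [e1, e2, mul_pos (mul_pos ha ha) hb, mul_nonneg (sq_nonneg a.im) hb.le]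

lemma key_pos (n : ℕ) (ρ : ℝ) (z w : Fin n → ℂ) (ζ : ℂ)
    (hp : (∑ j, (z j).im ^ 2) + (∑ j, (w j).im ^ 2) + 4 * |ζ.im| < ρ ^ 2) :
    0 < (((ρ : ℂ) ^ 2 + ∑ j, z j ^ 2 + ∑ j, w j ^ 2) + 4 * Complex.I * ζ).re ∧
    0 < (((ρ : ℂ) ^ 2 + ∑ j, z j ^ 2 + ∑ j, w j ^ 2) - 4 * Complex.I * ζ).re := by
  have hz : (∑ j, z j ^ 2).re = ∑ j, ((z j).re ^ 2 - (z j).im ^ 2) := by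
    rw [Complex.re_sum]
    congr 1; ext j
    simp [pow_two, Complex.mul_re]
  have hw : (∑ j, w j ^ 2).re = ∑ j, ((w j).re ^ 2 - (w j).im ^ 2) := by
    rw [Complex.re_sum]
    congr 1; ext j
    simp [pow_two, Complex.mul_re]
  have hzr : ∑ j, ((z j).re ^ 2 - (z j).im ^ 2) ≥ - ∑ j, (z j).im ^ 2 := by
    rw [Finset.sum_sub_distrib]
    have : (0:ℝ) ≤ ∑ j, (z j).re ^ 2 := Finset.sum_nonneg fun j _ => sq_nonneg _
    linarith
  have hwr : ∑ j, ((w j).re ^ 2 - (w j).im ^ 2) ≥ - ∑ j, (w j).im ^ 2 := by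
    rw [Finset.sum_sub_distrib]
    have : (0:ℝ) ≤ ∑ j, (w j).re ^ 2 := Finset.sum_nonneg fun j _ => sq_nonneg _
    linarith
  have hmul : (4 * Complex.I * ζ).re = -4 * ζ.im := by
    simp [Complex.mul_re]
  have hρre : (((ρ:ℝ):ℂ) ^ 2).re = ρ ^ 2 := by
    rw [← Complex.ofReal_pow, Complex.ofReal_re]
  have h1 := le_abs_self ζ.im
  have h2 := neg_abs_le ζ.im
  constructor
  · simp only [Complex.add_re, hρre, hz, hw, hmul]
    linarith
  · simp only [Complex.sub_re, Complex.add_re, hρre, hz, hw, hmul]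
    linarith

/-- on `D = {|Im z|² + |Im w|² + 4|Im ζ| < ρ²}`, with
`A = ρ² + Σ z_j² + Σ w_j²`, both `A ± 4iζ` have positive real part, `A² + 16ζ²` avoids
`(−∞,0]`, the principal-branch power `(A²+16ζ²)^{−(n+1+s)/2}` is holomorphic on `D`,
and at real points it equals `((ρ²+|x|²+|u|²)² + 16ξ²)^{−(n+1+s)/2}`. -/
theorem stmt_8 (n : ℕ) (hn : 1 ≤ n) (s ρ : ℝ) (hs : 0 < s) (hρ : 0 < ρ) :
    (∀ (z w : Fin n → ℂ) (ζ : ℂ),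
      (∑ j, (z j).im ^ 2) + (∑ j, (w j).im ^ 2) + 4 * |ζ.im| < ρ ^ 2 →
      0 < (((ρ : ℂ) ^ 2 + ∑ j, z j ^ 2 + ∑ j, w j ^ 2) + 4 * Complex.I * ζ).re ∧
      0 < (((ρ : ℂ) ^ 2 + ∑ j, z j ^ 2 + ∑ j, w j ^ 2) - 4 * Complex.I * ζ).re ∧
      ((ρ : ℂ) ^ 2 + ∑ j, z j ^ 2 + ∑ j, w j ^ 2) ^ 2 + 16 * ζ ^ 2 ∈ Complex.slitPlane) ∧
    DifferentiableOn ℂ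
      (fun p : (Fin n → ℂ) × (Fin n → ℂ) × ℂ =>
        (((ρ : ℂ) ^ 2 + ∑ j, p.1 j ^ 2 + ∑ j, p.2.1 j ^ 2) ^ 2 + 16 * p.2.2 ^ 2) ^
          (-(((n : ℂ) + 1 + s) / 2)))
      {p : (Fin n → ℂ) × (Fin n → ℂ) × ℂ |
        (∑ j, (p.1 j).im ^ 2) + (∑ j, (p.2.1 j).im ^ 2) + 4 * |p.2.2.im| < ρ ^ 2} ∧
    ∀ (x u : Fin n → ℝ) (ξ : ℝ),
      (((ρ : ℂ) ^ 2 + ∑ j, (x j : ℂ) ^ 2 + ∑ j, (u j : ℂ) ^ 2) ^ 2 + 16 * (ξ : ℂ) ^ 2) ^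
          (-(((n : ℂ) + 1 + s) / 2))
        = ((((ρ ^ 2 + (∑ j, x j ^ 2) + ∑ j, u j ^ 2) ^ 2 + 16 * ξ ^ 2) ^
            (-(((n : ℝ) + 1 + s) / 2)) : ℝ) : ℂ) := by
  have slit : ∀ (z w : Fin n → ℂ) (ζ : ℂ),
      (∑ j, (z j).im ^ 2) + (∑ j, (w j).im ^ 2) + 4 * |ζ.im| < ρ ^ 2 →
      ((ρ : ℂ) ^ 2 + ∑ j, z j ^ 2 + ∑ j, w j ^ 2) ^ 2 + 16 * ζ ^ 2 ∈ Complex.slitPlane := by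
    intro z w ζ hp
    obtain ⟨h1, h2⟩ := key_pos n ρ z w ζ hp
    set A := (ρ : ℂ) ^ 2 + ∑ j, z j ^ 2 + ∑ j, w j ^ 2
    have hfac : A ^ 2 + 16 * ζ ^ 2 = (A + 4 * Complex.I * ζ) * (A - 4 * Complex.I * ζ) := by
      have := Complex.I_sq
      ring_nf
      linear_combination (16 * ζ ^ 2) * Complex.I_sq
    rw [hfac]
    exact mul_mem_slitPlane_of_pos_re' h1 h2
  refine ⟨fun z w ζ hp => ⟨(key_pos n ρ z w ζ hp).1, (key_pos n ρ z w ζ hp).2, slit z w ζ hp⟩,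
    ?_, ?_⟩
  · intro p hp
    have hg : DifferentiableAt ℂ
        (fun p : (Fin n → ℂ) × (Fin n → ℂ) × ℂ =>
          ((ρ : ℂ) ^ 2 + ∑ j, p.1 j ^ 2 + ∑ j, p.2.1 j ^ 2) ^ 2 + 16 * p.2.2 ^ 2) p := by
      fun_prop
    exact (hg.cpow (differentiableAt_const _) (slit p.1 p.2.1 p.2.2 hp)).differentiableWithinAt
  · intro x u ξ
    have hb : (0:ℝ) ≤ (ρ ^ 2 + (∑ j, x j ^ 2) + ∑ j, u j ^ 2) ^ 2 + 16 * ξ ^ 2 := by positivity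
    rw [Complex.ofReal_cpow hb]
    congr 1 <;> push_cast <;> ring
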